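/- For every n ≥ 2, the harmonic function G_n(z) = -n/2 + Re(Σ_{j≥1} n z^j/(nj-1)) satisfies the Robin boundary condition n ∂_r G_n - G_n = 0 on the unit circle minus the point 1. -/

import Mathlib

open Filter Complex

lemma aux_denR {n : ℕ} (hn : 2 ≤ n) (j : ℕ) : (1:ℝ) ≤ (n:ℝ)*((j:ℝ)+1) - 1 := by
  have h2 : (2:ℝ) ≤ (n:ℝ) := by exact_mod_cast hn
  nlinarith [j.cast_nonneg (α := ℝ)]

lemma aux_denC (n j : ℕ) : ((n:ℂ)*((j:ℂ)+1) - 1) = (((n:ℝ)*((j:ℝ)+1) - 1 : ℝ) : ℂ) := by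
  push_cast; ring

lemma aux_denC_ne {n : ℕ} (hn : 2 ≤ n) (j : ℕ) : ((n:ℂ)*((j:ℂ)+1) - 1) ≠ 0 := by
  rw [aux_denC]
  exact_mod_cast ne_of_gt (lt_of_lt_of_le one_pos (aux_denR hn j))

lemma aux_cabs (θ : ℝ) : ‖(Complex.exp (θ * Complex.I))‖ = 1 := by
  rw [Complex.norm_exp]; simp

lemma aux_frac_le {n : ℕ} (hn : 2 ≤ n) (j : ℕ) : (n:ℝ)/((n:ℝ)*((j:ℝ)+1) - 1) ≤ 2 := by
  have h2 : (2:ℝ) ≤ (n:ℝ) := by exact_mod_cast hn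
  rw [div_le_iff₀ (lt_of_lt_of_le one_pos (aux_denR hn j))]
  nlinarith [j.cast_nonneg (α := ℝ)]

lemma aux_geom_norm (θ : ℝ) {r : ℝ} (hr0 : 0 ≤ r) (hr1 : r < 1) :
    ‖(r:ℂ) * Complex.exp (θ * Complex.I)‖ < 1 := by
  rw [norm_mul, Complex.norm_real, Real.norm_eq_abs,
    Complex.norm_exp]
  simp only [Complex.mul_I_re, Complex.ofReal_im, neg_zero, Real.exp_zero, mul_one]
  rwa [_root_.abs_of_nonneg hr0]

lemma aux_cne (θ : ℝ) (h1 : 0 < θ) (h2 : θ < 2 * Real.pi) : Complex.exp (θ * Complex.I) ≠ 1 := by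
  rw [Ne, Complex.exp_eq_one_iff]
  rintro ⟨k, hk⟩
  have h3 : θ = (k:ℝ) * (2*Real.pi) := by
    have h := mul_right_cancel₀ Complex.I_ne_zero
      (by linear_combination hk : (θ:ℂ) * I = ((k:ℂ) * (2*Real.pi)) * I)
    exact_mod_cast h
  rcases lt_trichotomy k 0 with h | h | h
  · have : (k:ℝ) ≤ -1 := by exact_mod_cast Int.le_of_lt_add_one (by simpa using h)
    nlinarith [Real.pi_pos]
  · rw [h] at h3; simp at h3; linarith
  · have : (1:ℝ) ≤ (k:ℝ) := by exact_mod_cast h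
    nlinarith [Real.pi_pos]

-- norms of the S-terms
lemma aux_S_norm {n : ℕ} (hn : 2 ≤ n) (θ : ℝ) {r : ℝ} (hr0 : 0 ≤ r) (j : ℕ) :
    ‖(n:ℂ)/((n:ℂ)*((j:ℂ)+1) - 1) * ((r:ℂ) * Complex.exp (θ * Complex.I))^j‖
      = (n:ℝ)/((n:ℝ)*((j:ℝ)+1) - 1) * r^j := by
  rw [aux_denC, norm_mul, norm_pow, norm_div, norm_mul]
  simp only [Complex.norm_natCast, Complex.norm_real, Real.norm_eq_abs, aux_cabs]
  rw [_root_.abs_of_nonneg hr0, _root_.abs_of_nonneg (by linarith [aux_denR hn j])]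
  ring

lemma aux_summable_S {n : ℕ} (hn : 2 ≤ n) (θ : ℝ) {r : ℝ} (hr0 : 0 ≤ r) (hr1 : r < 1) :
    Summable (fun j : ℕ => (n:ℂ)/((n:ℂ)*((j:ℂ)+1) - 1) * ((r:ℂ) * Complex.exp (θ * Complex.I))^j) := by
  apply Summable.of_norm_bounded (g := fun j => 2 * r^j)
    ((summable_geometric_of_lt_one hr0 hr1).mul_left 2)
  intro j
  rw [aux_S_norm hn θ hr0 j]
  have := aux_frac_le hn j
  have hp : (0:ℝ) ≤ r^j := by positivity
  nlinarith

lemma aux_summable_B {n : ℕ} (hn : 2 ≤ n) {r : ℝ} (hr0 : 0 ≤ r) (hr1 : r < 1) :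
    Summable (fun j : ℕ => (n:ℝ)/((n:ℝ)*((j:ℝ)+1) - 1) * r^j) := by
  apply Summable.of_nonneg_of_le
    (fun j => mul_nonneg (div_nonneg (Nat.cast_nonneg n) (by linarith [aux_denR hn j])) (by positivity))
    (fun j => ?_) ((summable_geometric_of_lt_one hr0 hr1).mul_left 2)
  have := aux_frac_le hn j
  have hp : (0:ℝ) ≤ r^j := by positivity
  nlinarith

lemma aux_summable_T {n : ℕ} (hn : 2 ≤ n) (θ : ℝ) {r : ℝ} (hr0 : 0 ≤ r) (hr1 : r < 1) :
    Summable (fun j : ℕ =>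
      (n:ℂ) * ((r:ℂ) * Complex.exp (θ * Complex.I))^(j+1) / ((n:ℂ)*((j:ℂ)+1) - 1)) := by
  apply Summable.congr ((aux_summable_S hn θ hr0 hr1).mul_right ((r:ℂ) * Complex.exp (θ * Complex.I)))
  intro j
  rw [pow_succ]
  ring

lemma aux_summable_D {n : ℕ} (hn : 2 ≤ n) (θ : ℝ) {r : ℝ} (hr0 : 0 ≤ r) (hr1 : r < 1) :
    Summable (fun j : ℕ =>
      (n:ℂ) * (((j:ℂ)+1) * ((r:ℂ) * Complex.exp (θ * Complex.I))^j * Complex.exp (θ * Complex.I))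
        / ((n:ℂ)*((j:ℂ)+1) - 1)) := by
  set c := Complex.exp (θ * Complex.I)
  have hgsum : Summable (fun j : ℕ => 2*((j:ℝ)+1) * r^j) := by
    have h1 := summable_pow_mul_geometric_of_norm_lt_one 1
      (by rwa [Real.norm_eq_abs, _root_.abs_of_nonneg hr0] : ‖r‖ < 1)
    have h2 := summable_geometric_of_lt_one hr0 hr1
    exact Summable.congr ((h1.add h2).mul_left 2) (fun j => by push_cast; ring)
  apply Summable.of_norm_bounded hgsum
  · intro j
    have hden := aux_denR hn j
    have habs : ‖(n:ℂ) * (((j:ℂ)+1) * ((r:ℂ) * c)^j * c) / ((n:ℂ)*((j:ℂ)+1) - 1)‖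
        = (n:ℝ)/((n:ℝ)*((j:ℝ)+1) - 1) * (((j:ℝ)+1) * r^j) := by
      have e1 : ((j:ℂ)+1) = (((j:ℝ)+1 : ℝ) : ℂ) := by push_cast; ring
      rw [aux_denC, e1, norm_div, norm_mul, norm_mul, norm_mul, norm_pow, norm_mul]
      simp only [Complex.norm_natCast, Complex.norm_real, Real.norm_eq_abs, aux_cabs]
      have hcabs : ‖c‖ = 1 := aux_cabs θ
      rw [hcabs, _root_.abs_of_nonneg hr0,
        _root_.abs_of_nonneg (by linarith : (0:ℝ) ≤ (n:ℝ)*((j:ℝ)+1)-1),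
        _root_.abs_of_nonneg (by positivity : (0:ℝ) ≤ (j:ℝ)+1)]
      ring
    rw [habs]
    have h2 := aux_frac_le hn j
    have hp : (0:ℝ) ≤ r^j := by positivity
    have h3 : (0:ℝ) ≤ (j:ℝ)+1 := by positivity
    calc (n:ℝ)/((n:ℝ)*((j:ℝ)+1) - 1) * (((j:ℝ)+1) * r^j)
        ≤ 2 * (((j:ℝ)+1) * r^j) := mul_le_mul_of_nonneg_right h2 (mul_nonneg h3 hp)
      _ = 2*((j:ℝ)+1)*r^j := by ring

lemma aux_deriv {n : ℕ} (hn : 2 ≤ n) (θ : ℝ) {r : ℝ} (hr0 : 0 < r) (hr1 : r < 1) :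
    HasDerivAt (fun r' : ℝ => ∑' j : ℕ,
        (n : ℂ) * ((r' : ℂ) * Complex.exp (θ * Complex.I))^(j+1) / ((n : ℂ)*((j : ℂ)+1) - 1))
      (∑' j : ℕ, (n : ℂ) * (((j:ℂ)+1) * ((r : ℂ) * Complex.exp (θ * Complex.I))^j
          * Complex.exp (θ * Complex.I)) / ((n : ℂ)*((j : ℂ)+1) - 1)) r := by
  set c := Complex.exp (θ * Complex.I) with hc
  set ρ := (1 + r)/2 with hρ
  have hρ0 : 0 < ρ := by positivity
  have hρ1 : ρ < 1 := by simp only [hρ]; linarith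
  have hrρ : r < ρ := by simp only [hρ]; linarith
  have hu : Summable (fun j : ℕ => 2*((j:ℝ)+1)*ρ^j) := by
    have h1 := summable_pow_mul_geometric_of_norm_lt_one 1 (by rwa [Real.norm_eq_abs, abs_of_pos hρ0])
    have h2 := summable_geometric_of_lt_one hρ0.le hρ1
    exact Summable.congr ((h1.add h2).mul_left 2) (fun j => by push_cast; ring)
  refine hasDerivAt_tsum_of_isPreconnected
    (g := fun (j : ℕ) (r' : ℝ) => (n : ℂ) * ((r' : ℂ) * c)^(j+1) / ((n : ℂ)*((j : ℂ)+1) - 1))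
    (g' := fun (j : ℕ) (y : ℝ) => (n : ℂ) * (((j:ℂ)+1) * ((y : ℂ) * c)^j * c) / ((n : ℂ)*((j : ℂ)+1) - 1))
    hu (isOpen_Ioo (a := -ρ) (b := ρ))
    (isPreconnected_Ioo) (fun j y _ => ?_) (fun j y hy => ?_) (show (0:ℝ) ∈ Set.Ioo (-ρ) ρ by constructor <;> [linarith; exact hρ0])
    ?_ (show r ∈ Set.Ioo (-ρ) ρ by constructor <;> linarith)
  · have h0 : HasDerivAt (fun w : ℂ => w * c) c (y:ℂ) := by
      simpa using (hasDerivAt_id (y:ℂ)).mul_const c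
    have h1 := (((h0.pow (j+1)).const_mul (n:ℂ)).div_const ((n : ℂ)*((j : ℂ)+1) - 1)).comp_ofReal
    convert h1 using 1
    push_cast
    · rfl
    · simp
    · simp
  · have hden := aux_denR hn j
    have e1 : ((j:ℂ)+1) = (((j:ℝ)+1 : ℝ) : ℂ) := by push_cast; ring
    have habs : ‖(n : ℂ) * (((j:ℂ)+1) * ((y : ℂ) * c)^j * c) / ((n : ℂ)*((j : ℂ)+1) - 1)‖
        = (n:ℝ)/((n:ℝ)*((j:ℝ)+1) - 1) * (((j:ℝ)+1) * |y|^j) := by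
      rw [aux_denC, e1, norm_div, norm_mul, norm_mul, norm_mul, norm_pow, norm_mul]
      have hcabs : ‖c‖ = 1 := aux_cabs θ
      rw [Complex.norm_natCast, Complex.norm_real, Real.norm_eq_abs, Complex.norm_real, Real.norm_eq_abs, Complex.norm_real, Real.norm_eq_abs, hcabs]
      rw [abs_of_pos (lt_of_lt_of_le one_pos hden), abs_of_pos (by positivity : (0:ℝ) < (j:ℝ)+1)]
      ring
    rw [habs]
    have hy' : |y| ≤ ρ := by rw [abs_le]; exact ⟨hy.1.le, hy.2.le⟩
    have h1 : |y|^j ≤ ρ^j := pow_le_pow_left₀ (abs_nonneg y) hy' j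
    have h2 := aux_frac_le hn j
    have h3 : (0:ℝ) < (j:ℝ)+1 := by positivity
    calc (n:ℝ)/((n:ℝ)*((j:ℝ)+1) - 1) * (((j:ℝ)+1) * |y|^j)
        ≤ 2 * (((j:ℝ)+1) * ρ^j) := by
          apply mul_le_mul h2 (by nlinarith [pow_nonneg (abs_nonneg y) j]) (by positivity) (by norm_num)
      _ = 2*((j:ℝ)+1)*ρ^j := by ring
  · exact Summable.congr summable_zero (fun j => by simp)

-- the algebraic rearrangement
lemma aux_sum_eq {n : ℕ} (hn : 2 ≤ n) (θ : ℝ) {r : ℝ} (hr0 : 0 < r) (hr1 : r < 1) :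
    (n:ℂ) * (∑' j : ℕ, (n : ℂ) * (((j:ℂ)+1) * ((r : ℂ) * Complex.exp (θ * Complex.I))^j
          * Complex.exp (θ * Complex.I)) / ((n : ℂ)*((j : ℂ)+1) - 1))
      - (∑' j : ℕ, (n : ℂ) * ((r : ℂ) * Complex.exp (θ * Complex.I))^(j+1) / ((n : ℂ)*((j : ℂ)+1) - 1))
    = (n:ℂ) * Complex.exp (θ * Complex.I) * (1 - (r:ℂ) * Complex.exp (θ * Complex.I))⁻¹
      + ((1 - r : ℝ) : ℂ) * (Complex.exp (θ * Complex.I) *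
          ∑' j : ℕ, (n:ℂ)/((n:ℂ)*((j:ℂ)+1) - 1) * ((r:ℂ) * Complex.exp (θ * Complex.I))^j) := by
  set c := Complex.exp (θ * Complex.I) with hc
  have hT := aux_summable_T hn θ hr0.le hr1
  have hD := aux_summable_D hn θ hr0.le hr1
  have hS := aux_summable_S hn θ hr0.le hr1
  have hG : Summable (fun j : ℕ => ((r:ℂ)*c)^j) :=
    summable_geometric_of_norm_lt_one (aux_geom_norm θ hr0.le hr1)
  calc (n:ℂ) * (∑' j : ℕ, (n : ℂ) * (((j:ℂ)+1) * ((r : ℂ)*c)^j * c) / ((n : ℂ)*((j : ℂ)+1) - 1))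
      - (∑' j : ℕ, (n : ℂ) * ((r : ℂ)*c)^(j+1) / ((n : ℂ)*((j : ℂ)+1) - 1))
      = ∑' j : ℕ, ((n:ℂ) * ((n : ℂ) * (((j:ℂ)+1) * ((r : ℂ)*c)^j * c) / ((n : ℂ)*((j : ℂ)+1) - 1))
          - (n : ℂ) * ((r : ℂ)*c)^(j+1) / ((n : ℂ)*((j : ℂ)+1) - 1)) := by
        rw [Summable.tsum_sub (hD.mul_left (n:ℂ)) hT, tsum_mul_left]
    _ = ∑' j : ℕ, ((n:ℂ) * c * ((r:ℂ)*c)^j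
          + ((1 - r : ℝ) : ℂ) * (c * ((n:ℂ)/((n:ℂ)*((j:ℂ)+1) - 1) * ((r:ℂ)*c)^j))) := by
        apply tsum_congr
        intro j
        have hd := aux_denC_ne hn j
        field_simp
        push_cast
        ring
    _ = (n:ℂ) * c * (1 - (r:ℂ)*c)⁻¹
        + ((1 - r : ℝ) : ℂ) * (c * ∑' j : ℕ, (n:ℂ)/((n:ℂ)*((j:ℂ)+1) - 1) * ((r:ℂ)*c)^j) := by
        rw [Summable.tsum_add (hG.mul_left ((n:ℂ)*c)) ((hS.mul_left c).mul_left (((1 - r : ℝ) : ℂ))),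
          tsum_mul_left, tsum_mul_left, tsum_mul_left,
          tsum_geometric_of_norm_lt_one (aux_geom_norm θ hr0.le hr1)]

lemma aux_re_val {n : ℕ} (θ : ℝ) (hne : Complex.exp (θ * Complex.I) ≠ 1) :
    ((n:ℂ) * Complex.exp (θ * Complex.I) * (1 - Complex.exp (θ * Complex.I))⁻¹).re = -(n:ℝ)/2 := by
  set c := Complex.exp (θ * Complex.I) with hc
  have hc0 : c ≠ 0 := Complex.exp_ne_zero _
  have h1c : (1:ℂ) - c ≠ 0 := sub_ne_zero.2 (Ne.symm hne)
  have hcc : (starRingEnd ℂ) c = c⁻¹ := by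
    rw [hc, ← Complex.exp_conj, ← Complex.exp_neg]
    congr 1
    simp [map_mul, Complex.conj_ofReal]
  have h1c' : (1:ℂ) - c⁻¹ ≠ 0 := by
    intro h
    rw [sub_eq_zero] at h
    exact hne (by rw [← inv_inv c, ← h]; norm_num)
  set z := (n:ℂ) * c * (1 - c)⁻¹ with hz
  have key : z + (starRingEnd ℂ) z = ((-(n:ℝ) : ℝ) : ℂ) := by
    have h1c2 : (-1:ℂ) + c ≠ 0 := by
      intro h; apply h1c; linear_combination -h
    rw [hz, map_mul, map_mul, map_inv₀, map_sub, map_one, hcc, Complex.conj_natCast]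
    push_cast
    field_simp
    ring
  rw [Complex.add_conj] at key
  have : 2 * z.re = -(n:ℝ) := by exact_mod_cast key
  linarith

theorem stmt_5 (n : ℕ) (hn : 2 ≤ n) (θ : ℝ) (h1 : 0 < θ) (h2 : θ < 2 * Real.pi) :
    Tendsto
      (fun r : ℝ =>
        (n : ℝ) * deriv (fun r' : ℝ =>
            -(n : ℝ)/2 +
              (∑' j : ℕ, (n : ℂ) * ((r' : ℂ) * Complex.exp (θ * Complex.I))^(j+1)
                / ((n : ℂ)*((j : ℂ)+1) - 1)).re) r
          - (-(n : ℝ)/2 +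
              (∑' j : ℕ, (n : ℂ) * ((r : ℂ) * Complex.exp (θ * Complex.I))^(j+1)
                / ((n : ℂ)*((j : ℂ)+1) - 1)).re))
      (nhdsWithin 1 (Set.Iio 1)) (nhds 0) := by
  set c := Complex.exp (θ * Complex.I) with hc
  have hne : c ≠ 1 := aux_cne θ h1 h2
  set S : ℝ → ℂ := fun r => ∑' j : ℕ, (n:ℂ)/((n:ℂ)*((j:ℂ)+1) - 1) * ((r:ℂ) * c)^j with hS
  set E : ℝ → ℝ := fun r =>
    ((n:ℝ)/2 + ((n:ℂ) * c * (1 - (r:ℂ) * c)⁻¹).re) + (1-r) * ((c * S r).re) with hE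
  have hIoo : Set.Ioo (0:ℝ) 1 ∈ nhdsWithin (1:ℝ) (Set.Iio 1) :=
    Ioo_mem_nhdsLT_of_mem ⟨by norm_num, le_refl 1⟩
  have heq : ∀ r ∈ Set.Ioo (0:ℝ) 1, E r =
      (n : ℝ) * deriv (fun r' : ℝ =>
            -(n : ℝ)/2 +
              (∑' j : ℕ, (n : ℂ) * ((r' : ℂ) * c)^(j+1)
                / ((n : ℂ)*((j : ℂ)+1) - 1)).re) r
          - (-(n : ℝ)/2 +
              (∑' j : ℕ, (n : ℂ) * ((r : ℂ) * c)^(j+1)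
                / ((n : ℂ)*((j : ℂ)+1) - 1)).re) := by
    rintro r ⟨hr0, hr1⟩
    have hD := aux_deriv hn θ hr0 hr1
    have hDfull : HasDerivAt (fun r' : ℝ =>
        -(n : ℝ)/2 + (∑' j : ℕ, (n : ℂ) * ((r' : ℂ) * c)^(j+1) / ((n : ℂ)*((j : ℂ)+1) - 1)).re)
        ((∑' j : ℕ, (n : ℂ) * (((j:ℂ)+1) * ((r : ℂ) * c)^j * c) / ((n : ℂ)*((j : ℂ)+1) - 1)).re) r := by
      simpa using (Complex.reCLM.hasFDerivAt.comp_hasDerivAt r hD).const_add (-(n:ℝ)/2)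
    rw [hDfull.deriv]
    have hre : (n:ℝ) * ((∑' j : ℕ, (n : ℂ) * (((j:ℂ)+1) * ((r : ℂ) * c)^j * c) / ((n : ℂ)*((j : ℂ)+1) - 1)).re)
        - (-(n:ℝ)/2 + (∑' j : ℕ, (n : ℂ) * ((r : ℂ) * c)^(j+1) / ((n : ℂ)*((j : ℂ)+1) - 1)).re)
        = ((n:ℂ) * (∑' j : ℕ, (n : ℂ) * (((j:ℂ)+1) * ((r : ℂ) * c)^j * c) / ((n : ℂ)*((j : ℂ)+1) - 1))
            - (∑' j : ℕ, (n : ℂ) * ((r : ℂ) * c)^(j+1) / ((n : ℂ)*((j : ℂ)+1) - 1))).re + (n:ℝ)/2 := by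
      simp only [Complex.sub_re, Complex.mul_re, Complex.natCast_re, Complex.natCast_im,
        zero_mul, sub_zero]
      ring

    rw [hre, aux_sum_eq hn θ hr0 hr1]
    rw [Complex.add_re, Complex.re_ofReal_mul]
    simp only [hE, hS]
    ring
  have hEtendsto : Tendsto E (nhdsWithin 1 (Set.Iio 1)) (nhds 0) := by
    have hpart1 : Tendsto (fun r : ℝ => (n:ℝ)/2 + ((n:ℂ) * c * (1 - (r:ℂ) * c)⁻¹).re)
        (nhdsWithin 1 (Set.Iio 1)) (nhds 0) := by
      have hcont : ContinuousAt (fun r : ℝ => (n:ℝ)/2 + ((n:ℂ) * c * (1 - (r:ℂ) * c)⁻¹).re) 1 := by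
        apply ContinuousAt.add continuousAt_const
        apply Complex.continuous_re.continuousAt.comp
        apply ContinuousAt.mul continuousAt_const
        apply ContinuousAt.inv₀
        · fun_prop
        · simpa using sub_ne_zero.2 (Ne.symm hne)
      have hval : (n:ℝ)/2 + ((n:ℂ) * c * (1 - ((1:ℝ):ℂ) * c)⁻¹).re = 0 := by
        rw [show ((1:ℝ):ℂ) * c = c by simp]
        rw [aux_re_val θ hne]
        ring
      have htd : Tendsto (fun r : ℝ => (n:ℝ)/2 + ((n:ℂ) * c * (1 - (r:ℂ) * c)⁻¹).re)
          (nhdsWithin 1 (Set.Iio 1)) (nhds ((n:ℝ)/2 + ((n:ℂ) * c * (1 - ((1:ℝ):ℂ) * c)⁻¹).re)) :=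
        hcont.tendsto.mono_left (nhdsWithin_le_nhds (s := Set.Iio 1))
      rwa [hval] at htd
    have hpart2 : Tendsto (fun r : ℝ => (1-r) * ((c * S r).re))
        (nhdsWithin 1 (Set.Iio 1)) (nhds 0) := by
      -- squeeze by (1-r) * B r
      have hbound : ∀ᶠ r in nhdsWithin (1:ℝ) (Set.Iio 1),
          ‖(1-r) * ((c * S r).re)‖ ≤ (1-r) * ∑' j : ℕ, (n:ℝ)/((n:ℝ)*((j:ℝ)+1) - 1) * r^j := by
        filter_upwards [hIoo] with r hr
        obtain ⟨hr0, hr1⟩ := hr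
        rw [norm_mul, Real.norm_eq_abs, Real.norm_eq_abs, _root_.abs_of_nonneg (by linarith : (0:ℝ) ≤ 1-r)]
        apply mul_le_mul_of_nonneg_left _ (by linarith : (0:ℝ) ≤ 1-r)
        have hcabs : ‖c‖ = 1 := aux_cabs θ
        have hnormS : ‖S r‖ ≤ ∑' j : ℕ, (n:ℝ)/((n:ℝ)*((j:ℝ)+1) - 1) * r^j := by
          refine le_trans (norm_tsum_le_tsum_norm ?_) (le_of_eq ?_)
          · apply Summable.congr (aux_summable_B hn hr0.le hr1)
            intro j
            exact (aux_S_norm hn θ hr0.le j).symm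
          · exact tsum_congr (fun j => aux_S_norm hn θ hr0.le j)
        calc |(c * S r).re| ≤ ‖c * S r‖ := Complex.abs_re_le_norm _
          _ = ‖S r‖ := by rw [norm_mul, hcabs, one_mul]
          _ ≤ ∑' j : ℕ, (n:ℝ)/((n:ℝ)*((j:ℝ)+1) - 1) * r^j := hnormS
      apply squeeze_zero_norm' hbound
      -- now the epsilon argument
      rw [NormedAddCommGroup.tendsto_nhds_zero]
      intro ε hε
      obtain ⟨N, hN⟩ := exists_nat_one_div_lt (show (0:ℝ) < ε/4 by linarith)
      have hN' : (2:ℝ)/(N+1) < ε/2 := by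
        rw [div_lt_iff₀ (by positivity)] at hN ⊢
        linarith
      set δ := ε/(4*(N+1)) with hδ
      have hδ0 : 0 < δ := by positivity
      have hmaxlt : max 0 (1-δ) < 1 := max_lt one_pos (by linarith)
      have hIoo2 : Set.Ioo (max 0 (1-δ)) 1 ∈ nhdsWithin (1:ℝ) (Set.Iio 1) :=
        Ioo_mem_nhdsLT_of_mem ⟨hmaxlt, le_refl 1⟩
      filter_upwards [hIoo2] with r hr
      have hr0 : (0:ℝ) < r := lt_of_le_of_lt (le_max_left _ _) hr.1
      have hrδ : 1 - r < δ := by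
        have := lt_of_le_of_lt (le_max_right 0 (1-δ)) hr.1
        linarith
      have hr1 : r < 1 := hr.2
      have h1r : (0:ℝ) < 1 - r := by linarith
      set t : ℕ → ℝ := fun j => (n:ℝ)/((n:ℝ)*((j:ℝ)+1) - 1) * r^j with ht
      have htnn : ∀ j, 0 ≤ t j := fun j =>
        mul_nonneg (div_nonneg (Nat.cast_nonneg n) (by linarith [aux_denR hn j])) (by positivity)
      have hBsum : Summable t := aux_summable_B hn hr0.le hr1
      have hsplit : (∑ j ∈ Finset.range N, t j) + ∑' k : ℕ, t (k+N) = ∑' j : ℕ, t j :=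
        hBsum.sum_add_tsum_nat_add N
      have hhead : ∑ j ∈ Finset.range N, t j ≤ (N:ℝ) * 2 := by
        calc ∑ j ∈ Finset.range N, t j ≤ ∑ _j ∈ Finset.range N, (2:ℝ) := by
              apply Finset.sum_le_sum
              intro j _
              have hfr := aux_frac_le hn j
              have hpow : r^j ≤ 1 := pow_le_one₀ hr0.le hr1.le
              have hfrnn : 0 ≤ (n:ℝ)/((n:ℝ)*((j:ℝ)+1) - 1) :=
                div_nonneg (Nat.cast_nonneg n) (by linarith [aux_denR hn j])
              calc t j ≤ (n:ℝ)/((n:ℝ)*((j:ℝ)+1) - 1) * 1 :=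
                    mul_le_mul_of_nonneg_left hpow hfrnn
                _ ≤ 2 := by rw [mul_one]; exact hfr
          _ = (N:ℝ) * 2 := by simp [Finset.sum_const]
      have htail : ∑' k : ℕ, t (k+N) ≤ (2/((N:ℝ)+1)) * (1-r)⁻¹ := by
        have hterm : ∀ k : ℕ, t (k+N) ≤ (2/((N:ℝ)+1)) * r^k := by
          intro k
          have h2n : (2:ℝ) ≤ (n:ℝ) := by exact_mod_cast hn
          have hfr : (n:ℝ)/((n:ℝ)*(((k+N:ℕ):ℝ)+1) - 1) ≤ 2/((N:ℝ)+1) := by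
            rw [div_le_div_iff₀ (by push_cast; nlinarith [k.cast_nonneg (α := ℝ), N.cast_nonneg (α := ℝ)]) (by positivity)]
            push_cast
            nlinarith [k.cast_nonneg (α := ℝ), N.cast_nonneg (α := ℝ)]
          have hpow : r^(k+N) ≤ r^k := by
            rw [pow_add]
            calc r^k * r^N ≤ r^k * 1 :=
                  mul_le_mul_of_nonneg_left (pow_le_one₀ hr0.le hr1.le) (by positivity)
              _ = r^k := mul_one _
          calc t (k+N) ≤ (n:ℝ)/((n:ℝ)*(((k+N:ℕ):ℝ)+1) - 1) * r^k := by
                exact mul_le_mul_of_nonneg_left hpow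
                  (div_nonneg (Nat.cast_nonneg n) (by linarith [aux_denR hn (k+N)]))
            _ ≤ (2/((N:ℝ)+1)) * r^k := mul_le_mul_of_nonneg_right hfr (by positivity)
        calc ∑' k : ℕ, t (k+N) ≤ ∑' k : ℕ, (2/((N:ℝ)+1)) * r^k :=
              Summable.tsum_le_tsum hterm ((summable_nat_add_iff N).2 hBsum)
                ((summable_geometric_of_lt_one hr0.le hr1).mul_left _)
          _ = (2/((N:ℝ)+1)) * (1-r)⁻¹ := by
              rw [tsum_mul_left, tsum_geometric_of_lt_one hr0.le hr1]
      have hBnn : 0 ≤ ∑' j : ℕ, t j := tsum_nonneg htnn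
      rw [Real.norm_eq_abs, _root_.abs_of_nonneg (mul_nonneg h1r.le hBnn)]
      rw [← hsplit, mul_add]
      have hδe : δ * (4*((N:ℝ)+1)) = ε := by rw [hδ]; field_simp
      have e1 : (1-r) * (∑ j ∈ Finset.range N, t j) ≤ ε/2 := by
        have := mul_le_mul_of_nonneg_left hhead h1r.le
        have h2 : (1-r) * ((N:ℝ)*2) ≤ δ * ((N:ℝ)*2) :=
          mul_le_mul_of_nonneg_right hrδ.le (by positivity)
        nlinarith [N.cast_nonneg (α := ℝ)]
      have e2 : (1-r) * (∑' k : ℕ, t (k+N)) < ε/2 := by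
        have h3 : (1-r) * (∑' k : ℕ, t (k+N)) ≤ (1-r) * ((2/((N:ℝ)+1)) * (1-r)⁻¹) :=
          mul_le_mul_of_nonneg_left htail h1r.le
        have h4 : (1-r) * ((2/((N:ℝ)+1)) * (1-r)⁻¹) = 2/((N:ℝ)+1) := by
          rw [show (1-r) * ((2/((N:ℝ)+1)) * (1-r)⁻¹) = 2/((N:ℝ)+1) * ((1-r) * (1-r)⁻¹) by ring,
            mul_inv_cancel₀ (ne_of_gt h1r), mul_one]
        rw [h4] at h3
        exact lt_of_le_of_lt h3 hN'
      linarith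
    have := hpart1.add hpart2
    rw [add_zero] at this
    exact this.congr (fun r => by rw [hE])
  exact hEtendsto.congr' (eventuallyEq_of_mem hIoo heq)
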